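/- Let 0 < η < ν < 1, μ = 1 − ν, α > 0, and let (C_N) be a sequence of integers with C_N = ηN + O(1). Then lim_{N→∞} N^{1/4} · exp((α − α·log α − α·log(ν/(ν−η)))·√N) · ∫₀^{√N} (1 − u/√N)^{N−C_N} · (1 + (μ/ν)·u/√N)^{C_N} · u^{α√N − 1} du = √(2π/α) · exp((2νη − ν² − η)·α²/(2(ν−η)²)). -/

import Mathlib

open Filter Topology MeasureTheory Asymptotics

namespace SDA

open Set

lemma rho_bound {y : ℝ} (h : |y| ≤ 1/2) : |Real.log (1+y) - y + y^2/2| ≤ 2*|y|^3 := by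
  have h1 : |(-y)| < 1 := by rw [abs_neg]; linarith
  have := Real.abs_log_sub_add_sum_range_le h1 2
  simp [Finset.sum_range_succ] at this
  have e2 : -y + y^2/(1+1) + Real.log (1+y) = Real.log (1+y) - y + y^2/2 := by ring
  rw [e2] at this
  have h4 : |y|^3 / (1 - |y|) ≤ 2*|y|^3 := by
    rw [div_le_iff₀ (by linarith [abs_nonneg y])]
    have : 0 ≤ |y|^3 := by positivity
    nlinarith [abs_nonneg y]
  exact this.trans h4

lemma logcc {X Y w1 w2 : ℝ} (hX : 0 < X) (hY : 0 < Y) (hw1 : 0 ≤ w1) (hw2 : 0 ≤ w2)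
    (hw : w1 + w2 = 1) : w1 * Real.log X + w2 * Real.log Y ≤ Real.log (w1*X + w2*Y) := by
  have := strictConcaveOn_log_Ioi.concaveOn.2 (mem_Ioi.2 hX) (mem_Ioi.2 hY) hw1 hw2 hw
  simpa [smul_eq_mul] using this


noncomputable def u0 (η ν α : ℝ) : ℝ := α * ν / (ν - η)
noncomputable def cc (η ν α : ℝ) : ℝ := α - α * Real.log α - α * Real.log (ν / (ν - η))
noncomputable def hh (η ν μ α r b s : ℝ) : ℝ :=
  cc η ν α * b ^ 2
    + ((1 - η) * b ^ 4 - r) * Real.log (1 - (u0 η ν α + s / b) / b ^ 2)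
    + (η * b ^ 4 + r) * Real.log (1 + μ / ν * (u0 η ν α + s / b) / b ^ 2)
    + (α * b ^ 2 - 1) * Real.log (u0 η ν α + s / b)
noncomputable def bb (N : ℕ) : ℝ := (N:ℝ) ^ ((1:ℝ)/4)
noncomputable def rr (η : ℝ) (C : ℕ → ℕ) (N : ℕ) : ℝ := (C N : ℝ) - η*N
noncomputable def AA (η ν α : ℝ) (N : ℕ) : ℝ := -(u0 η ν α) * bb N
noncomputable def BB (η ν α : ℝ) (N : ℕ) : ℝ := ((bb N)^2 - u0 η ν α) * bb N
noncomputable def FF (η ν μ α : ℝ) (C : ℕ → ℕ) (N : ℕ) : ℝ → ℝ :=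
  (Set.Ioo (AA η ν α N) (BB η ν α N)).indicator
    (fun s => Real.exp (hh η ν μ α (rr η C N) (bb N) s))

lemma hh_measurable (η ν μ α r b : ℝ) : Measurable (fun s => Real.exp (hh η ν μ α r b s)) := by
  unfold hh; measurability

lemma hh_concave {η ν μ α r b A B : ℝ} (hb : 0 < b) (hm : 0 < μ / ν)
    (hA1 : 0 ≤ (1 - η) * b ^ 4 - r) (hA2 : 0 ≤ η * b ^ 4 + r) (hA3 : 0 ≤ α * b ^ 2 - 1)
    (hAB : ∀ s ∈ Set.Ioo A B, 0 < u0 η ν α + s / b ∧ u0 η ν α + s / b < b ^ 2) :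
    ∀ p ∈ Set.Ioo A B, ∀ q ∈ Set.Ioo A B, ∀ w1 w2 : ℝ, 0 ≤ w1 → 0 ≤ w2 → w1 + w2 = 1 →
      w1 * hh η ν μ α r b p + w2 * hh η ν μ α r b q ≤ hh η ν μ α r b (w1 * p + w2 * q) := by
  intro p hp q hq w1 w2 hw1 hw2 hw
  obtain rfl : w2 = 1 - w1 := by linarith
  obtain ⟨hup, hup'⟩ := hAB p hp
  obtain ⟨huq, huq'⟩ := hAB q hq
  have hb2 : (0:ℝ) < b ^ 2 := by positivity
  -- log arguments at p and q
  have hE1p : 0 < 1 - (u0 η ν α + p / b) / b ^ 2 := by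
    rw [sub_pos, div_lt_one hb2]; exact hup'
  have hE1q : 0 < 1 - (u0 η ν α + q / b) / b ^ 2 := by
    rw [sub_pos, div_lt_one hb2]; exact huq'
  have hE2p : 0 < 1 + μ / ν * (u0 η ν α + p / b) / b ^ 2 := by positivity
  have hE2q : 0 < 1 + μ / ν * (u0 η ν α + q / b) / b ^ 2 := by positivity
  have key1 : (1 : ℝ) - (u0 η ν α + (w1 * p + (1-w1) * q) / b) / b ^ 2
      = w1 * (1 - (u0 η ν α + p / b) / b ^ 2) + (1-w1) * (1 - (u0 η ν α + q / b) / b ^ 2) := by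
    field_simp
    ring
  have key2 : (1 : ℝ) + μ / ν * (u0 η ν α + (w1 * p + (1-w1) * q) / b) / b ^ 2
      = w1 * (1 + μ / ν * (u0 η ν α + p / b) / b ^ 2)
        + (1-w1) * (1 + μ / ν * (u0 η ν α + q / b) / b ^ 2) := by
    field_simp
    ring
  have key3 : u0 η ν α + (w1 * p + (1-w1) * q) / b
      = w1 * (u0 η ν α + p / b) + (1-w1) * (u0 η ν α + q / b) := by
    field_simp
    ring
  have l1 := logcc hE1p hE1q hw1 hw2 hw
  have l2 := logcc hE2p hE2q hw1 hw2 hw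
  have l3 := logcc hup huq hw1 hw2 hw
  have m1 := mul_le_mul_of_nonneg_left l1 hA1
  have m2 := mul_le_mul_of_nonneg_left l2 hA2
  have m3 := mul_le_mul_of_nonneg_left l3 hA3
  calc w1 * hh η ν μ α r b p + (1-w1) * hh η ν μ α r b q
      = cc η ν α * b ^ 2
        + ((1 - η) * b ^ 4 - r) * (w1 * Real.log (1 - (u0 η ν α + p / b) / b ^ 2)
            + (1-w1) * Real.log (1 - (u0 η ν α + q / b) / b ^ 2))
        + (η * b ^ 4 + r) * (w1 * Real.log (1 + μ / ν * (u0 η ν α + p / b) / b ^ 2)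
            + (1-w1) * Real.log (1 + μ / ν * (u0 η ν α + q / b) / b ^ 2))
        + (α * b ^ 2 - 1) * (w1 * Real.log (u0 η ν α + p / b)
            + (1-w1) * Real.log (u0 η ν α + q / b)) := by unfold hh; ring
    _ ≤ cc η ν α * b ^ 2
        + ((1 - η) * b ^ 4 - r) * Real.log (w1 * (1 - (u0 η ν α + p / b) / b ^ 2)
            + (1-w1) * (1 - (u0 η ν α + q / b) / b ^ 2))
        + (η * b ^ 4 + r) * Real.log (w1 * (1 + μ / ν * (u0 η ν α + p / b) / b ^ 2)
            + (1-w1) * (1 + μ / ν * (u0 η ν α + q / b) / b ^ 2))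
        + (α * b ^ 2 - 1) * Real.log (w1 * (u0 η ν α + p / b)
            + (1-w1) * (u0 η ν α + q / b)) :=
        add_le_add (add_le_add (add_le_add le_rfl m1) m2) m3
    _ = hh η ν μ α r b (w1 * p + (1-w1) * q) := by
        unfold hh; rw [key1, key2, key3]

lemma concave_chord {A B : ℝ} {f : ℝ → ℝ}
    (hcc : ∀ p ∈ Set.Ioo A B, ∀ q ∈ Set.Ioo A B, ∀ w1 w2 : ℝ, 0 ≤ w1 → 0 ≤ w2 → w1 + w2 = 1 →
      w1 * f p + w2 * f q ≤ f (w1 * p + w2 * q))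
    {x y z : ℝ} (hx : x ∈ Set.Ioo A B) (hz : z ∈ Set.Ioo A B) (hxy : x < y) (hyz : y < z) :
    (z - y) * f x + (y - x) * f z ≤ (z - x) * f y := by
  have hd : (0:ℝ) < z - x := by linarith
  have hd0 : z - x ≠ 0 := ne_of_gt hd
  have hw1 : (0:ℝ) ≤ (z - y)/(z - x) := div_nonneg (by linarith) hd.le
  have hw2 : (0:ℝ) ≤ (y - x)/(z - x) := div_nonneg (by linarith) hd.le
  have hsum : (z - y)/(z - x) + (y - x)/(z - x) = 1 := by field_simp; ring
  have key := hcc x hx z hz _ _ hw1 hw2 hsum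
  have hpt : (z - y)/(z - x) * x + (y - x)/(z - x) * z = y := by field_simp; try ring
  rw [hpt] at key
  have := mul_le_mul_of_nonneg_left key hd.le
  calc (z - y) * f x + (y - x) * f z
      = (z - x) * ((z - y)/(z - x) * f x + (y - x)/(z - x) * f z) := by field_simp; try ring
    _ ≤ (z - x) * f y := this

lemma concave_tail {A B M M2 δ : ℝ} {f : ℝ → ℝ}
    (hcc : ∀ p ∈ Set.Ioo A B, ∀ q ∈ Set.Ioo A B, ∀ w1 w2 : ℝ, 0 ≤ w1 → 0 ≤ w2 → w1 + w2 = 1 →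
      w1 * f p + w2 * f q ≤ f (w1 * p + w2 * q))
    (hA : A < -1) (hB : 1 < B) (hδ : 0 < δ) (hM2 : 0 ≤ M2)
    (h0 : f 0 ≤ M) (h1 : f 1 - f 0 ≤ -δ) (hm1 : f (-1) - f 0 ≤ -δ)
    (d1 : f 0 - f (-1) ≤ M2) (d2 : f 0 - f 1 ≤ M2) :
    ∀ s ∈ Set.Ioo A B, f s ≤ M + M2 + δ - δ * |s| := by
  intro s hs
  have h0m : (0:ℝ) ∈ Set.Ioo A B := ⟨by linarith, by linarith⟩
  have h1m : (1:ℝ) ∈ Set.Ioo A B := ⟨by linarith, hB⟩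
  have hm1m : (-1:ℝ) ∈ Set.Ioo A B := ⟨hA, by linarith⟩
  rcases le_or_gt 1 s with hs1 | hs1
  · -- s ≥ 1
    have habs : |s| = s := abs_of_pos (by linarith)
    rw [habs]
    rcases eq_or_lt_of_le hs1 with rfl | hs1'
    · nlinarith
    · have key := concave_chord hcc h0m hs (by norm_num) hs1'
      nlinarith
  rcases le_or_gt s (-1) with hs2 | hs2
  · -- s ≤ -1
    have habs : |s| = -s := abs_of_neg (by linarith)
    rw [habs]
    rcases eq_or_lt_of_le hs2 with rfl | hs2'
    · nlinarith
    · have key := concave_chord hcc hs h0m hs2' (by norm_num)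
      nlinarith
  · -- -1 < s < 1
    have habs : |s| ≤ 1 := abs_le.2 ⟨by linarith, by linarith⟩
    have habs0 : 0 ≤ |s| := abs_nonneg s
    rcases lt_trichotomy s 0 with hneg | hzero | hpos
    · have key := concave_chord hcc hs h1m hneg (by norm_num)
      nlinarith
    · subst hzero; simp; nlinarith
    · have key := concave_chord hcc hm1m hs (by linarith) hpos
      nlinarith

lemma rho_term_zero {A y g : ℕ → ℝ}
    (hy : ∀ᶠ N in atTop, |y N| ≤ 1/2)
    (hg : ∀ᶠ N in atTop, |A N| * (2*|y N|^3) ≤ g N)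
    (hg0 : Tendsto g atTop (𝓝 0)) :
    Tendsto (fun N => A N * (Real.log (1 + y N) - y N + (y N)^2/2)) atTop (𝓝 0) := by
  apply squeeze_zero_norm' _ hg0
  filter_upwards [hy, hg] with N h1 h2
  calc ‖A N * (Real.log (1 + y N) - y N + (y N)^2/2)‖
      = |A N| * |Real.log (1 + y N) - y N + (y N)^2/2| := abs_mul _ _
    _ ≤ |A N| * (2*|y N|^3) := mul_le_mul_of_nonneg_left (rho_bound h1) (abs_nonneg _)
    _ ≤ g N := h2

set_option maxHeartbeats 1000000 in
lemma hh_tendsto {η ν μ α : ℝ} (hη : 0 < η) (hην : η < ν) (hν : ν < 1) (hμ : μ = 1 - ν)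
    (hα : 0 < α) {r b : ℕ → ℝ} {K : ℝ} (hr : ∀ᶠ N in atTop, |r N| ≤ K)
    (hb : Tendsto b atTop atTop) (s : ℝ) :
    Tendsto (fun N => hh η ν μ α (r N) (b N) s) atTop
      (𝓝 (-((1-η) + η*(μ/ν)^2)/2 * (u0 η ν α)^2 - Real.log (u0 η ν α)
          - α/(2*(u0 η ν α)^2) * s^2)) := by
  subst hμ
  have hνη : 0 < ν - η := by linarith
  have hν0 : 0 < ν := by linarith
  have hμ0 : 0 < 1 - ν := by linarith
  have hU : 0 < u0 η ν α := by unfold u0; positivity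
  set U := u0 η ν α with hUdef
  set m : ℝ := (1-ν)/ν with hmdef
  have hm : 0 < m := by positivity
  -- basic limits
  have hbpos : ∀ᶠ N in atTop, 0 < b N := hb.eventually_gt_atTop 0
  have hbi : Tendsto (fun N => (b N)⁻¹) atTop (𝓝 0) := hb.inv_tendsto_atTop
  have hsb : Tendsto (fun N => s / b N) atTop (𝓝 0) := by
    simpa [div_eq_mul_inv] using hbi.const_mul s
  have htu : Tendsto (fun N => U + s / b N) atTop (𝓝 U) := by
    simpa using tendsto_const_nhds.add hsb
  have hb2 : Tendsto (fun N => (b N)^2) atTop atTop :=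
    (tendsto_pow_atTop two_ne_zero).comp hb
  have hb2i : Tendsto (fun N => ((b N)^2)⁻¹) atTop (𝓝 0) := hb2.inv_tendsto_atTop
  have hy1 : Tendsto (fun N => (U + s / b N) / (b N)^2) atTop (𝓝 0) := by
    simpa [div_eq_mul_inv] using htu.mul hb2i
  have hy2 : Tendsto (fun N => m * (U + s / b N) / (b N)^2) atTop (𝓝 0) := by
    simpa [mul_div_assoc] using hy1.const_mul m
  have hw : Tendsto (fun N => s / (b N * U)) atTop (𝓝 0) := by
    have he : (fun N => s / (b N * U)) = fun N => (s / U) * (b N)⁻¹ := by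
      funext N; field_simp
    rw [he]
    simpa using hbi.const_mul (s / U)
  -- eventual bounds
  have hubd : ∀ᶠ N in atTop, |U + s / b N| ≤ U + 1 := by
    have h2 := Metric.tendsto_nhds.mp htu 1 one_pos
    filter_upwards [h2] with N h
    rw [Real.dist_eq] at h
    have hU' : |U| = U := abs_of_pos hU
    calc |U + s / b N| ≤ |U| + |(U + s / b N) - U| := by
          have := abs_add_le U ((U + s / b N) - U); simpa using this
      _ ≤ U + 1 := by rw [hU']; linarith
  have hy1s : ∀ᶠ N in atTop, |(U + s / b N) / (b N)^2| ≤ 1/2 := by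
    have := Metric.tendsto_nhds.mp hy1 (1/2) (by norm_num)
    filter_upwards [this] with N h
    rw [Real.dist_eq, sub_zero] at h; exact h.le
  have hy2s : ∀ᶠ N in atTop, |m * (U + s / b N) / (b N)^2| ≤ 1/2 := by
    have := Metric.tendsto_nhds.mp hy2 (1/2) (by norm_num)
    filter_upwards [this] with N h
    rw [Real.dist_eq, sub_zero] at h; exact h.le
  have hws : ∀ᶠ N in atTop, |s / (b N * U)| ≤ 1/2 := by
    have := Metric.tendsto_nhds.mp hw (1/2) (by norm_num)
    filter_upwards [this] with N h
    rw [Real.dist_eq, sub_zero] at h; exact h.le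
  have hwpos : ∀ᶠ N in atTop, 0 < 1 + s / (b N * U) := by
    filter_upwards [hws] with N h
    have := abs_le.mp h; linarith [this.1]
  -- decomposition
  have decomp : ∀ᶠ N in atTop, hh η ν (1-ν) α (r N) (b N) s =
      (-((1-η) + η*m^2)/2 * (U + s/b N)^2 - α/(2*U^2) * s^2)
      + ((1-η)*(b N)^4) * (Real.log (1 + -((U + s/b N)/(b N)^2))
          - (-((U + s/b N)/(b N)^2)) + (-((U + s/b N)/(b N)^2))^2/2)
      + (η*(b N)^4) * (Real.log (1 + m*(U + s/b N)/(b N)^2)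
          - m*(U + s/b N)/(b N)^2 + (m*(U + s/b N)/(b N)^2)^2/2)
      + (α*(b N)^2) * (Real.log (1 + s/(b N * U))
          - s/(b N * U) + (s/(b N * U))^2/2)
      + (r N) * (Real.log (1 + m*(U + s/b N)/(b N)^2)
          - Real.log (1 + -((U + s/b N)/(b N)^2)))
      + (- Real.log (U + s/b N)) := by
    filter_upwards [hbpos, hwpos] with N hbN hwN
    have hbN0 : b N ≠ 0 := ne_of_gt hbN
    have e1 : (1:ℝ) + -((U + s/b N)/(b N)^2) = 1 - (U + s/b N)/(b N)^2 := by ring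
    have hlogu : Real.log (U + s/b N)
        = Real.log U + Real.log (1 + s/(b N * U)) := by
      rw [show U + s/b N = U * (1 + s/(b N * U)) by field_simp]
      exact Real.log_mul (ne_of_gt hU) (ne_of_gt hwN)
    have hlogU : Real.log U = Real.log α + Real.log (ν/(ν-η)) := by
      rw [hUdef, show u0 η ν α = α * (ν/(ν-η)) by unfold u0; rw [mul_div_assoc]]
      exact Real.log_mul (ne_of_gt hα) (ne_of_gt (div_pos hν0 hνη))
    rw [e1]
    unfold hh cc
    rw [← hUdef, ← hmdef, hlogu, hlogU]
    set L1 := Real.log (1 - (U + s / b N)/(b N)^2) with hL1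
    set L2 := Real.log (1 + m*(U + s/b N)/(b N)^2) with hL2
    set L3 := Real.log (1 + s/(b N * U)) with hL3
    set LA := Real.log α with hLA
    set LB := Real.log (ν/(ν-η)) with hLB
    have hUexp : U = α * ν / (ν - η) := hUdef
    rw [hUexp, hmdef]
    have hνne : ν ≠ 0 := ne_of_gt hν0
    have hνηne : (ν - η) ≠ 0 := ne_of_gt hνη
    field_simp
    ring
  -- limits of the pieces
  have lim0 : Tendsto (fun N => -((1-η) + η*m^2)/2 * (U + s/b N)^2 - α/(2*U^2) * s^2)
      atTop (𝓝 (-((1-η) + η*m^2)/2 * U^2 - α/(2*U^2) * s^2)) :=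
    (tendsto_const_nhds.mul (htu.pow 2)).sub tendsto_const_nhds
  have lim1 : Tendsto (fun N => ((1-η)*(b N)^4) * (Real.log (1 + -((U + s/b N)/(b N)^2))
      - (-((U + s/b N)/(b N)^2)) + (-((U + s/b N)/(b N)^2))^2/2)) atTop (𝓝 0) := by
    apply rho_term_zero (g := fun N => (2 * |1 - η| * (U+1)^3) * ((b N)^2)⁻¹)
    · filter_upwards [hy1s] with N h
      rw [abs_neg]; exact h
    · filter_upwards [hbpos, hubd] with N hbN hub
      have hb2p : (0:ℝ) < (b N)^2 := by positivity
      have hyb : |-((U + s/b N)/(b N)^2)| ≤ (U+1) / (b N)^2 := by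
        rw [abs_neg, abs_div, abs_of_pos hb2p]
        gcongr
      calc |(1-η)*(b N)^4| * (2*|-((U + s/b N)/(b N)^2)|^3)
          = |1-η| * (b N)^4 * (2*|-((U + s/b N)/(b N)^2)|^3) := by
            rw [abs_mul, abs_of_nonneg (by positivity : (0:ℝ) ≤ (b N)^4)]
        _ ≤ |1-η| * (b N)^4 * (2*((U+1) / (b N)^2)^3) := by
            gcongr
        _ = (2 * |1 - η| * (U+1)^3) * ((b N)^2)⁻¹ := by field_simp
    · simpa using hb2i.const_mul (2 * |1 - η| * (U+1)^3)
  have lim2 : Tendsto (fun N => (η*(b N)^4) * (Real.log (1 + m*(U + s/b N)/(b N)^2)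
      - m*(U + s/b N)/(b N)^2 + (m*(U + s/b N)/(b N)^2)^2/2)) atTop (𝓝 0) := by
    apply rho_term_zero (g := fun N => (2 * η * (m*(U+1))^3) * ((b N)^2)⁻¹)
    · exact hy2s
    · filter_upwards [hbpos, hubd] with N hbN hub
      have hb2p : (0:ℝ) < (b N)^2 := by positivity
      have hyb : |m*(U + s/b N)/(b N)^2| ≤ m*(U+1) / (b N)^2 := by
        rw [abs_div, abs_of_pos hb2p, abs_mul, abs_of_pos hm]
        gcongr
      calc |η*(b N)^4| * (2*|m*(U + s/b N)/(b N)^2|^3)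
          = η * (b N)^4 * (2*|m*(U + s/b N)/(b N)^2|^3) := by
            rw [abs_mul, abs_of_pos hη, abs_of_nonneg (by positivity : (0:ℝ) ≤ (b N)^4)]
        _ ≤ η * (b N)^4 * (2*(m*(U+1) / (b N)^2)^3) := by
            gcongr
        _ = (2 * η * (m*(U+1))^3) * ((b N)^2)⁻¹ := by field_simp
    · simpa using hb2i.const_mul (2 * η * (m*(U+1))^3)
  have lim3 : Tendsto (fun N => (α*(b N)^2) * (Real.log (1 + s/(b N * U))
      - s/(b N * U) + (s/(b N * U))^2/2)) atTop (𝓝 0) := by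
    apply rho_term_zero (g := fun N => (2 * α * (|s|/U)^3) * (b N)⁻¹)
    · exact hws
    · filter_upwards [hbpos] with N hbN
      have hyb : |s/(b N * U)| = (|s|/U) / b N := by
        rw [abs_div, abs_mul, abs_of_pos hbN, abs_of_pos hU, mul_comm (b N) U, div_div]
      calc |α*(b N)^2| * (2*|s/(b N * U)|^3)
          = α * (b N)^2 * (2*((|s|/U)/b N)^3) := by
            rw [abs_mul, abs_of_pos hα, abs_of_nonneg (by positivity : (0:ℝ) ≤ (b N)^2), hyb]
        _ ≤ (2 * α * (|s|/U)^3) * (b N)⁻¹ := le_of_eq (by field_simp)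
    · simpa using hbi.const_mul (2 * α * (|s|/U)^3)
  have hL1lim : Tendsto (fun N => Real.log (1 + -((U + s/b N)/(b N)^2))) atTop (𝓝 0) := by
    have harg : Tendsto (fun N => 1 + -((U + s/b N)/(b N)^2)) atTop (𝓝 1) := by
      simpa using tendsto_const_nhds.add hy1.neg
    simpa using harg.log one_ne_zero
  have hL2lim : Tendsto (fun N => Real.log (1 + m*(U + s/b N)/(b N)^2)) atTop (𝓝 0) := by
    have harg : Tendsto (fun N => 1 + m*(U + s/b N)/(b N)^2) atTop (𝓝 1) := by
      simpa using tendsto_const_nhds.add hy2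
    simpa using harg.log one_ne_zero
  have lim4 : Tendsto (fun N => (r N) * (Real.log (1 + m*(U + s/b N)/(b N)^2)
      - Real.log (1 + -((U + s/b N)/(b N)^2)))) atTop (𝓝 0) := by
    apply squeeze_zero_norm' (a := fun N => K * |Real.log (1 + m*(U + s/b N)/(b N)^2)
      - Real.log (1 + -((U + s/b N)/(b N)^2))|)
    · filter_upwards [hr] with N h
      rw [norm_mul, Real.norm_eq_abs, Real.norm_eq_abs]
      exact mul_le_mul_of_nonneg_right h (abs_nonneg _)
    · have := (hL2lim.sub hL1lim).abs.const_mul K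
      simpa using this
  have lim5 : Tendsto (fun N => - Real.log (U + s/b N)) atTop (𝓝 (- Real.log U)) :=
    (htu.log (ne_of_gt hU)).neg
  have total := ((((lim0.add lim1).add lim2).add lim3).add lim4).add lim5
  have deq : (fun N => hh η ν (1-ν) α (r N) (b N) s) =ᶠ[atTop] (fun N =>
      (-((1-η) + η*m^2)/2 * (U + s/b N)^2 - α/(2*U^2) * s^2)
      + ((1-η)*(b N)^4) * (Real.log (1 + -((U + s/b N)/(b N)^2))
          - (-((U + s/b N)/(b N)^2)) + (-((U + s/b N)/(b N)^2))^2/2)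
      + (η*(b N)^4) * (Real.log (1 + m*(U + s/b N)/(b N)^2)
          - m*(U + s/b N)/(b N)^2 + (m*(U + s/b N)/(b N)^2)^2/2)
      + (α*(b N)^2) * (Real.log (1 + s/(b N * U))
          - s/(b N * U) + (s/(b N * U))^2/2)
      + (r N) * (Real.log (1 + m*(U + s/b N)/(b N)^2)
          - Real.log (1 + -((U + s/b N)/(b N)^2)))
      + (- Real.log (U + s/b N))) := decomp
  have final := Tendsto.congr' deq.symm total
  convert final using 2
  ring
lemma exp_decay_le {D δ : ℝ} (hδ : 0 < δ) (s : ℝ) :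
    Real.exp (D - δ*|s|) ≤ (Real.exp D * ((δ^2+4)/δ^2)) * (1 + s^2)⁻¹ := by
  have hE1 : δ*|s|/2 + 1 ≤ Real.exp (δ*|s|/2) := Real.add_one_le_exp _
  have hEpos : (0:ℝ) < Real.exp (δ*|s|/2) := Real.exp_pos _
  have hsq : (δ*|s|/2 + 1)^2 ≤ (Real.exp (δ*|s|/2))^2 := by
    apply pow_le_pow_left₀ (by positivity) hE1
  have hexp2 : Real.exp (δ*|s|) = (Real.exp (δ*|s|/2))^2 := by
    rw [sq, ← Real.exp_add]; congr 1; ring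
  have key : δ^2*(1+s^2) ≤ (δ^2+4)*(Real.exp (δ*|s|/2))^2 := by
    nlinarith [mul_le_mul_of_nonneg_left hsq (show (0:ℝ) ≤ δ^2+4 by positivity), sq_abs s,
      mul_nonneg (mul_nonneg (mul_nonneg hδ.le hδ.le) hδ.le) (abs_nonneg s),
      mul_nonneg hδ.le (abs_nonneg s), sq_nonneg (δ*|s|)]
  have h1s : (0:ℝ) < 1 + s^2 := by positivity
  rw [Real.exp_sub, hexp2, div_le_iff₀ (by positivity), ← sub_nonneg]
  have expand : Real.exp D * ((δ^2+4)/δ^2) * (1+s^2)⁻¹ * (Real.exp (δ*|s|/2))^2 - Real.exp D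
      = (Real.exp D / (δ^2 * (1+s^2))) * ((δ^2+4)*(Real.exp (δ*|s|/2))^2 - δ^2*(1+s^2)) := by
    field_simp
  rw [expand]
  have : (0:ℝ) ≤ (δ^2+4)*(Real.exp (δ*|s|/2))^2 - δ^2*(1+s^2) := by linarith
  positivity
end SDA

open SDA Set

theorem supercritical_denominator_asymptotics
    (η ν μ α : ℝ) (hη : 0 < η) (hην : η < ν) (hν : ν < 1) (hμ : μ = 1 - ν)
    (hα : 0 < α) (C : ℕ → ℕ)
    (hC : (fun N : ℕ => (C N : ℝ) - η * N) =O[atTop] fun _ : ℕ => (1 : ℝ)) :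
    Tendsto (fun N : ℕ =>
        (N : ℝ) ^ ((1:ℝ)/4) *
          Real.exp ((α - α * Real.log α - α * Real.log (ν / (ν - η))) * Real.sqrt N) *
          ∫ u in Set.Ioo (0:ℝ) (Real.sqrt N),
            (1 - u / Real.sqrt N) ^ (N - C N) *
              (1 + (μ / ν) * u / Real.sqrt N) ^ (C N) *
              u ^ (α * Real.sqrt N - 1))
      atTop
      (𝓝 (Real.sqrt (2 * Real.pi / α) *
        Real.exp ((2 * ν * η - ν ^ 2 - η) * α ^ 2 / (2 * (ν - η) ^ 2)))) := by
  have hν0 : 0 < ν := lt_trans hη hην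
  have hνη : 0 < ν - η := by linarith
  have hμ0 : 0 < μ := by rw [hμ]; linarith
  have hmν : 0 < μ / ν := div_pos hμ0 hν0
  have hU : 0 < u0 η ν α := by unfold u0; positivity
  have hUne : u0 η ν α ≠ 0 := ne_of_gt hU
  set κ := α/(2*(u0 η ν α)^2) with hκdef
  have hκ : 0 < κ := by positivity
  set VV := -((1-η) + η*(μ/ν)^2)/2 * (u0 η ν α)^2 - Real.log (u0 η ν α) with hVVdef
  -- basic facts about bb
  have hbtop : Tendsto bb atTop atTop :=
    (tendsto_rpow_atTop (by norm_num)).comp tendsto_natCast_atTop_atTop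
  have hb2sqrt : ∀ N : ℕ, (bb N)^2 = Real.sqrt N := by
    intro N
    rw [bb, ← Real.rpow_natCast ((N:ℝ) ^ ((1:ℝ)/4)) 2, ← Real.rpow_mul (Nat.cast_nonneg N),
      Real.sqrt_eq_rpow]
    norm_num
  have hb4 : ∀ N : ℕ, (bb N)^4 = N := by
    intro N
    rw [bb, ← Real.rpow_natCast ((N:ℝ) ^ ((1:ℝ)/4)) 4, ← Real.rpow_mul (Nat.cast_nonneg N)]
    norm_num
  have hbpos : ∀ᶠ N in atTop, 0 < bb N := hbtop.eventually_gt_atTop 0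
  have hb2top : Tendsto (fun N => (bb N)^2) atTop atTop :=
    (tendsto_pow_atTop two_ne_zero).comp hbtop
  -- bound on rr
  obtain ⟨K, hK⟩ := hC.bound
  have hr : ∀ᶠ N in atTop, |rr η C N| ≤ K := by
    filter_upwards [hK] with N h
    simpa [rr] using h
  -- C N ≤ N eventually
  have hCleN : ∀ᶠ N in atTop, C N ≤ N := by
    have h1 : Tendsto (fun N : ℕ => (1-η)*(N:ℝ)) atTop atTop :=
      (tendsto_natCast_atTop_atTop (R := ℝ)).const_mul_atTop (by linarith)
    filter_upwards [hr, h1.eventually_ge_atTop K] with N h2 h3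
    have := abs_le.mp h2
    have : (C N : ℝ) ≤ (N : ℝ) := by unfold rr at this; linarith [this.1, this.2]
    exact_mod_cast this
  -- coefficient signs
  have hA1pos : ∀ᶠ N in atTop, 0 ≤ (1-η)*(bb N)^4 - rr η C N := by
    filter_upwards [hCleN] with N h
    rw [hb4]
    unfold rr
    have : (C N : ℝ) ≤ (N : ℝ) := Nat.cast_le.mpr h
    linarith
  have hA2pos : ∀ N, 0 ≤ η*(bb N)^4 + rr η C N := by
    intro N
    rw [hb4]
    unfold rr
    have : (0:ℝ) ≤ (C N : ℝ) := Nat.cast_nonneg _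
    linarith
  have hA3pos : ∀ᶠ N in atTop, 0 ≤ α*(bb N)^2 - 1 := by
    filter_upwards [(hb2top.const_mul_atTop hα).eventually_ge_atTop 1] with N h
    linarith
  -- endpoints
  have hAbot : Tendsto (AA η ν α) atTop atBot := by
    have h1 : Tendsto (fun N => u0 η ν α * bb N) atTop atTop := hbtop.const_mul_atTop hU
    have : (AA η ν α) = fun N => -(u0 η ν α * bb N) := by
      funext N; unfold AA; ring
    rw [this]
    exact tendsto_neg_atBot_iff.mpr h1
  have hBtop : Tendsto (BB η ν α) atTop atTop := by
    apply tendsto_atTop_mono' atTop _ hbtop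
    filter_upwards [hbpos, hb2top.eventually_ge_atTop (u0 η ν α + 1)] with N h1 h2
    unfold BB
    nlinarith
  have hAm1 : ∀ᶠ N in atTop, AA η ν α N < -1 := hAbot.eventually (eventually_lt_atBot (-1))
  have hB1 : ∀ᶠ N in atTop, 1 < BB η ν α N := hBtop.eventually (eventually_gt_atTop 1)
  -- membership conditions
  have hABmem : ∀ᶠ N in atTop, ∀ s ∈ Set.Ioo (AA η ν α N) (BB η ν α N),
      0 < u0 η ν α + s / bb N ∧ u0 η ν α + s / bb N < (bb N)^2 := by
    filter_upwards [hbpos] with N hbN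
    intro s hs
    obtain ⟨h1, h2⟩ := hs
    constructor
    · have : -(u0 η ν α) < s / bb N := by
        rw [lt_div_iff₀ hbN]
        unfold AA at h1; linarith
      linarith
    · have : s / bb N < (bb N)^2 - u0 η ν α := by
        rw [div_lt_iff₀ hbN]
        unfold BB at h2; linarith
      linarith
  -- value limits
  have T0 := hh_tendsto hη hην hν hμ hα hr hbtop 0
  have T1 := hh_tendsto hη hην hν hμ hα hr hbtop 1
  have Tm1 := hh_tendsto hη hην hν hμ hα hr hbtop (-1)
  have T0' : Tendsto (fun N => hh η ν μ α (rr η C N) (bb N) 0) atTop (𝓝 VV) := by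
    convert T0 using 2; rw [hVVdef]; ring
  have T1' : Tendsto (fun N => hh η ν μ α (rr η C N) (bb N) 1) atTop (𝓝 (VV - κ)) := by
    convert T1 using 2; rw [hVVdef, hκdef]; ring
  have Tm1' : Tendsto (fun N => hh η ν μ α (rr η C N) (bb N) (-1)) atTop (𝓝 (VV - κ)) := by
    convert Tm1 using 2; rw [hVVdef, hκdef]; ring
  have ev0 : ∀ᶠ N in atTop, hh η ν μ α (rr η C N) (bb N) 0 ≤ VV + 1 :=
    (T0'.eventually_lt_const (by linarith)).mono fun N h => h.le
  have ev1 : ∀ᶠ N in atTop,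
      hh η ν μ α (rr η C N) (bb N) 1 - hh η ν μ α (rr η C N) (bb N) 0 ≤ -(κ/2) :=
    ((T1'.sub T0').eventually_lt_const (by linarith)).mono fun N h => h.le
  have evm1 : ∀ᶠ N in atTop,
      hh η ν μ α (rr η C N) (bb N) (-1) - hh η ν μ α (rr η C N) (bb N) 0 ≤ -(κ/2) :=
    ((Tm1'.sub T0').eventually_lt_const (by linarith)).mono fun N h => h.le
  have ev2 : ∀ᶠ N in atTop,
      hh η ν μ α (rr η C N) (bb N) 0 - hh η ν μ α (rr η C N) (bb N) 1 ≤ κ + 1 :=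
    ((T0'.sub T1').eventually_lt_const (by linarith)).mono fun N h => h.le
  have ev3 : ∀ᶠ N in atTop,
      hh η ν μ α (rr η C N) (bb N) 0 - hh η ν μ α (rr η C N) (bb N) (-1) ≤ κ + 1 :=
    ((T0'.sub Tm1').eventually_lt_const (by linarith)).mono fun N h => h.le
  -- dominated convergence
  have hmeasF : ∀ᶠ N in atTop, AEStronglyMeasurable (FF η ν μ α C N) volume := by
    apply Eventually.of_forall
    intro N
    exact ((hh_measurable η ν μ α (rr η C N) (bb N)).indicator measurableSet_Ioo).aestronglyMeasurable
  have hbound : ∀ᶠ N in atTop, ∀ᵐ s : ℝ, ‖FF η ν μ α C N s‖ ≤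
      (Real.exp ((VV + 1) + (κ + 1) + κ/2) * (((κ/2)^2+4)/(κ/2)^2)) * (1 + s^2)⁻¹ := by
    filter_upwards [hbpos, hA1pos, hA3pos, hAm1, hB1, hABmem, ev0, ev1, evm1, ev2, ev3]
      with N hbN hA1 hA3 hAm hB1' hABm h0 h1 hm1 h2 h3
    apply Eventually.of_forall
    intro s
    by_cases hmem : s ∈ Set.Ioo (AA η ν α N) (BB η ν α N)
    · rw [FF, indicator_of_mem hmem, Real.norm_eq_abs, abs_of_pos (Real.exp_pos _)]
      have conc := hh_concave hbN hmν hA1 (hA2pos N) hA3 hABm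
      have tail := concave_tail conc hAm hB1' (half_pos hκ) (by linarith : (0:ℝ) ≤ κ + 1)
        h0 h1 hm1 h3 h2 s hmem
      calc Real.exp (hh η ν μ α (rr η C N) (bb N) s)
          ≤ Real.exp ((VV + 1) + (κ + 1) + κ/2 - (κ/2) * |s|) := Real.exp_le_exp.mpr tail
        _ ≤ _ := exp_decay_le (half_pos hκ) s
    · rw [FF, indicator_of_notMem hmem]
      simp only [norm_zero]
      positivity
  have hGint : Integrable (fun s : ℝ =>
      (Real.exp ((VV + 1) + (κ + 1) + κ/2) * (((κ/2)^2+4)/(κ/2)^2)) * (1 + s^2)⁻¹) :=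
    integrable_inv_one_add_sq.const_mul _
  have hlim : ∀ᵐ s : ℝ, Tendsto (fun N => FF η ν μ α C N s) atTop
      (𝓝 (Real.exp (VV - κ * s^2))) := by
    apply Eventually.of_forall
    intro s
    have evmem : ∀ᶠ N in atTop, s ∈ Set.Ioo (AA η ν α N) (BB η ν α N) := by
      filter_upwards [hAbot.eventually (eventually_lt_atBot s),
        hBtop.eventually (eventually_gt_atTop s)] with N hh1 hh2
      exact ⟨hh1, hh2⟩
    have heq : (fun N => Real.exp (hh η ν μ α (rr η C N) (bb N) s)) =ᶠ[atTop]
        (fun N => FF η ν μ α C N s) := by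
      filter_upwards [evmem] with N hNs
      rw [FF, indicator_of_mem hNs]
    apply Tendsto.congr' heq
    have := (hh_tendsto hη hην hν hμ hα hr hbtop s).rexp
    convert this using 2
  have DCT := MeasureTheory.tendsto_integral_filter_of_dominated_convergence _
    hmeasF hbound hGint hlim
  -- compute the limit integral
  have hgauss : (∫ s : ℝ, Real.exp (VV - κ * s^2)) =
      Real.sqrt (2 * Real.pi / α) *
        Real.exp ((2 * ν * η - ν ^ 2 - η) * α ^ 2 / (2 * (ν - η) ^ 2)) := by
    have e1 : (fun s : ℝ => Real.exp (VV - κ * s^2))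
        = fun s : ℝ => Real.exp VV * Real.exp (-κ * s^2) := by
      funext s
      rw [← Real.exp_add]
      congr 1
      ring
    rw [e1, MeasureTheory.integral_const_mul, integral_gaussian]
    have h2 : Real.sqrt (Real.pi/κ) = Real.sqrt (2*Real.pi/α) * u0 η ν α := by
      rw [show Real.pi/κ = (2*Real.pi/α) * (u0 η ν α)^2 by rw [hκdef]; field_simp]
      rw [Real.sqrt_mul (by positivity), Real.sqrt_sq hU.le]
    have h3 : Real.exp VV
        = Real.exp ((2 * ν * η - ν ^ 2 - η) * α ^ 2 / (2 * (ν - η) ^ 2)) / u0 η ν α := by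
      rw [hVVdef, Real.exp_sub, Real.exp_log hU]
      congr 2
      rw [hμ]
      unfold u0
      field_simp
      ring
    rw [h2, h3]
    field_simp
  rw [hgauss] at DCT
  -- identify the original expression with ∫ FF
  apply Tendsto.congr' _ DCT
  symm
  filter_upwards [hbpos, hCleN, hA3pos, hAm1, hB1, hABmem] with N hbN hCle hA3 hAm hB1' hABm
  have hbne : bb N ≠ 0 := ne_of_gt hbN
  have hsqrtN : Real.sqrt N = (bb N)^2 := (hb2sqrt N).symm
  have hNq : (N:ℝ) ^ ((1:ℝ)/4) = bb N := rfl
  rw [hNq, hsqrtN]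
  have hsq0 : (0:ℝ) ≤ (bb N)^2 := by positivity
  -- step 1: Ioo to interval integral
  rw [show (α - α * Real.log α - α * Real.log (ν / (ν - η))) = cc η ν α from rfl]
  rw [← MeasureTheory.integral_Ioc_eq_integral_Ioo,
    ← intervalIntegral.integral_of_le hsq0]
  -- step 2: substitution
  have sub := intervalIntegral.integral_comp_add_mul
    (f := fun u => (1 - u / (bb N)^2) ^ (N - C N) *
      (1 + (μ / ν) * u / (bb N)^2) ^ (C N) * u ^ (α * (bb N)^2 - 1))
    (a := AA η ν α N) (b := BB η ν α N) (inv_ne_zero hbne) (u0 η ν α)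
  have hend1 : u0 η ν α + (bb N)⁻¹ * (AA η ν α N) = 0 := by
    unfold AA; field_simp; ring
  have hend2 : u0 η ν α + (bb N)⁻¹ * (BB η ν α N) = (bb N)^2 := by
    unfold BB; field_simp; ring
  rw [hend1, hend2, inv_inv, smul_eq_mul] at sub
  rw [show bb N * Real.exp (cc η ν α * (bb N)^2) *
      (∫ u in (0:ℝ)..((bb N)^2), (1 - u / (bb N)^2) ^ (N - C N) *
        (1 + (μ / ν) * u / (bb N)^2) ^ (C N) * u ^ (α * (bb N)^2 - 1))
    = Real.exp (cc η ν α * (bb N)^2) *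
      (bb N * ∫ u in (0:ℝ)..((bb N)^2), (1 - u / (bb N)^2) ^ (N - C N) *
        (1 + (μ / ν) * u / (bb N)^2) ^ (C N) * u ^ (α * (bb N)^2 - 1)) from by ring]
  rw [← sub]
  rw [← intervalIntegral.integral_const_mul]
  -- step 3: interval to set integral on Ioo
  have hABle : AA η ν α N ≤ BB η ν α N := by linarith
  rw [intervalIntegral.integral_of_le hABle, MeasureTheory.integral_Ioc_eq_integral_Ioo]
  -- step 4: pointwise equality on Ioo
  rw [show (∫ s : ℝ, FF η ν μ α C N s)
      = ∫ s in Set.Ioo (AA η ν α N) (BB η ν α N),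
          Real.exp (hh η ν μ α (rr η C N) (bb N) s) from
    MeasureTheory.integral_indicator measurableSet_Ioo]
  apply MeasureTheory.setIntegral_congr_fun measurableSet_Ioo
  intro s hs
  obtain ⟨hu1, hu2⟩ := hABm s hs
  have hdiv : (bb N)⁻¹ * s = s / bb N := inv_mul_eq_div _ _
  simp only [hdiv]
  have hb2p : (0:ℝ) < (bb N)^2 := by positivity
  have hE1 : 0 < 1 - (u0 η ν α + s / bb N) / (bb N)^2 := by
    rw [sub_pos, div_lt_one hb2p]; exact hu2
  have hE2 : 0 < 1 + μ / ν * (u0 η ν α + s / bb N) / (bb N)^2 := by positivity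
  have eq1 : (1 - (u0 η ν α + s / bb N) / (bb N)^2) ^ (N - C N)
      = Real.exp (((N:ℝ) - (C N:ℝ)) * Real.log (1 - (u0 η ν α + s / bb N) / (bb N)^2)) := by
    rw [show ((N:ℝ) - (C N:ℝ)) = ((N - C N : ℕ) : ℝ) from by rw [Nat.cast_sub hCle],
      ← Real.log_pow, Real.exp_log (pow_pos hE1 _)]
  have eq2 : (1 + μ / ν * (u0 η ν α + s / bb N) / (bb N)^2) ^ (C N)
      = Real.exp ((C N:ℝ) * Real.log (1 + μ / ν * (u0 η ν α + s / bb N) / (bb N)^2)) := by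
    rw [← Real.log_pow, Real.exp_log (pow_pos hE2 _)]
  have eq3 : (u0 η ν α + s / bb N) ^ (α * (bb N)^2 - 1)
      = Real.exp ((α * (bb N)^2 - 1) * Real.log (u0 η ν α + s / bb N)) := by
    rw [Real.rpow_def_of_pos hu1, mul_comm]
  rw [eq1, eq2, eq3, ← Real.exp_add, ← Real.exp_add, ← Real.exp_add]
  congr 1
  unfold hh rr
  rw [hb4]
  ring
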